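/- Let W = W(A,T,φ) be a simple generalized Witt algebra over a field F of characteristic 0 (so A ≠ 0 and φ is nondegenerate). Let A' be a subgroup of A that is free abelian of rank n with basis ε_1, …, ε_n, and let T' be an m-dimensional subspace of T (m ≤ n) with basis ∂_1, …, ∂_m, such that (A',T') is a nondegenerate pair; set ∂_i = ∂_m for m ≤ i ≤ n. Let k_1, …, k_n, k'_1, …, k'_n be integers, each at least 2, such that any two of these 2n integers are relatively prime, and set w = Σ_{i=1}^n (t^{k_iε_i} + t^{k'_iε_i}) ∂_i. Let θ be the automorphism of W given by θ(t^α ∂) = χ(α) t^{σ(α)} τ(∂), where χ : A → F× is a character, σ is a group automorphism of A, and τ is an F-linear automorphism of T satisfying φ(τ(∂), σ(γ)) = φ(∂, γ) for all ∂ ∈ T, γ ∈ A. If θ(w) = w, then θ(x) = x for every x in the subalgebra consisting of the finitely supported functions supported in A' with values in T'. -/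

import Mathlib

/-! Generalized Witt algebras `W(A,T,φ)` over a field `F` of characteristic `0`,
following Djokovic-Zhao. Here `A` is an (additive) abelian group, `T` an
`F`-vector space, and `φ : T × A → F` is `F`-linear in the first variable and
additive in the second (encoded as `φ : T →ₗ[F] (A →+ F)`). -/

namespace GW

variable {F : Type*} [Field F]
variable {A : Type*} [AddCommGroup A]
variable {T : Type*} [AddCommGroup T] [Module F T]
variable (φ : T →ₗ[F] (A →+ F))

/-- The bracket on finitely supported functions `A →₀ T`: the bilinear extension of
`[t^α a, t^β b] = t^(α+β) (φ a β • b - φ b α • a)`. -/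
noncomputable def brk (x y : A →₀ T) : A →₀ T :=
  x.sum fun α a => y.sum fun β b => Finsupp.single (α + β) (φ a β • b - φ b α • a)

lemma brk_zero_left (y : A →₀ T) : brk φ 0 y = 0 := by
  simp [brk]

lemma brk_zero_right (x : A →₀ T) : brk φ x 0 = 0 := by
  simp [brk]

lemma brk_single_single (α β : A) (a b : T) :
    brk φ (Finsupp.single α a) (Finsupp.single β b)
      = Finsupp.single (α + β) (φ a β • b - φ b α • a) := by
  unfold brk
  rw [Finsupp.sum_single_index, Finsupp.sum_single_index]
  · simp
  · simp

lemma brk_add_left (x x' y : A →₀ T) : brk φ (x + x') y = brk φ x y + brk φ x' y := by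
  unfold brk
  rw [Finsupp.sum_add_index']
  · intro α; simp
  · intro α a a'
    rw [← Finsupp.sum_add]
    congr 1
    funext β b
    rw [← Finsupp.single_add]
    congr 1
    simp only [map_add, LinearMap.add_apply, AddMonoidHom.add_apply, add_smul, smul_add]
    abel

lemma brk_add_right (x y y' : A →₀ T) : brk φ x (y + y') = brk φ x y + brk φ x y' := by
  unfold brk
  rw [← Finsupp.sum_add]
  congr 1
  funext α a
  rw [Finsupp.sum_add_index']
  · intro β; simp
  · intro β b b'
    rw [← Finsupp.single_add]
    congr 1
    simp only [map_add, LinearMap.add_apply, AddMonoidHom.add_apply, add_smul, smul_add]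
    abel

lemma brk_neg_swap (x y : A →₀ T) : brk φ y x = - brk φ x y := by
  unfold brk
  rw [Finsupp.sum_comm]
  rw [← Finsupp.sum_neg]
  congr 1
  funext α a
  rw [← Finsupp.sum_neg]
  congr 1
  funext β b
  rw [← Finsupp.single_neg, add_comm β α]
  congr 1
  abel

lemma brk_smul_right (c : F) (x y : A →₀ T) : brk φ x (c • y) = c • brk φ x y := by
  unfold brk
  rw [Finsupp.smul_sum]
  congr 1
  funext α a
  rw [Finsupp.sum_smul_index', Finsupp.smul_sum]
  · congr 1
    funext β b
    rw [Finsupp.smul_single]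
    congr 1
    simp only [map_smul, LinearMap.smul_apply, AddMonoidHom.smul_apply, smul_sub, smul_smul,
      smul_eq_mul]
    rw [mul_comm]
  · intro β; simp

lemma brk_self [CharZero F] (x : A →₀ T) : brk φ x x = 0 := by
  have h : brk φ x x = -brk φ x x := brk_neg_swap φ x x
  have h2 : (2 : F) • brk φ x x = 0 := by
    rw [two_smul]
    nth_rewrite 2 [h]
    simp
  calc brk φ x x = (2 : F)⁻¹ • ((2 : F) • brk φ x x) :=
        (inv_smul_smul₀ two_ne_zero _).symm
    _ = 0 := by rw [h2, smul_zero]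

lemma brk_leibniz (x y z : A →₀ T) :
    brk φ x (brk φ y z) = brk φ (brk φ x y) z + brk φ y (brk φ x z) := by
  induction x using Finsupp.induction_linear with
  | zero => simp [brk_zero_left, brk_zero_right]
  | add f g hf hg =>
      simp only [brk_add_left, brk_add_right, hf, hg]; abel
  | single α a =>
    induction y using Finsupp.induction_linear with
    | zero => simp [brk_zero_left, brk_zero_right]
    | add f g hf hg =>
        simp only [brk_add_left, brk_add_right, hf, hg]; abel
    | single β b =>
      induction z using Finsupp.induction_linear with
      | zero => simp [brk_zero_left, brk_zero_right]
      | add f g hf hg =>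
          simp only [brk_add_left, brk_add_right, hf, hg]; abel
      | single γ c =>
        rw [brk_single_single, brk_single_single, brk_single_single, brk_single_single,
          brk_single_single, brk_single_single]
        rw [show β + (α + γ) = α + β + γ by abel, show α + (β + γ) = α + β + γ by abel,
          ← Finsupp.single_add]
        congr 1
        simp only [map_add, map_sub, map_smul, LinearMap.sub_apply, LinearMap.smul_apply,
          AddMonoidHom.add_apply, AddMonoidHom.sub_apply, AddMonoidHom.smul_apply,
          smul_eq_mul, smul_sub, sub_smul, add_smul, smul_smul]
        ring_nf
        module

variable (F A T) in
/-- The carrier of the generalized Witt algebra `W(A,T,φ)`: finitely supported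
functions from `A` to `T`, where `t^α ∂` corresponds to the function supported
at `α` with value `∂`. -/
@[nolint unusedArguments]
def W (_φ : T →ₗ[F] (A →+ F)) : Type _ := A →₀ T

noncomputable instance : AddCommGroup (W F A T φ) := inferInstanceAs (AddCommGroup (A →₀ T))

noncomputable instance : Module F (W F A T φ) := inferInstanceAs (Module F (A →₀ T))

/-- The element `t^α ∂` of the generalized Witt algebra. -/
noncomputable def tt (α : A) (d : T) : W F A T φ := Finsupp.single α d

/-- The underlying finitely supported function of an element of `W(A,T,φ)`. -/
def toF (x : W F A T φ) : A →₀ T := x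

/-- The Lie ring structure on the generalized Witt algebra `W(A,T,φ)`, with bracket
determined by `[t^α ∂, t^β ∂'] = t^(α+β) (φ(∂,β) • ∂' - φ(∂',α) • ∂)`. -/
noncomputable instance [CharZero F] : LieRing (W F A T φ) :=
  { (inferInstance : AddCommGroup (A →₀ T)) with
    bracket := fun x y => brk φ (toF φ x) (toF φ y)
    add_lie := fun x y z => brk_add_left φ x y z
    lie_add := fun x y z => brk_add_right φ x y z
    lie_self := fun x => brk_self φ x
    leibniz_lie := fun x y z => brk_leibniz φ x y z }

/-- The generalized Witt algebra `W(A,T,φ)` as a Lie algebra over `F`. -/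
noncomputable instance [CharZero F] : LieAlgebra F (W F A T φ) :=
  { (inferInstance : Module F (A →₀ T)) with
    lie_smul := fun c x y => brk_smul_right φ c x y }

@[simp] theorem bracket_tt [CharZero F] (α β : A) (a b : T) :
    ⁅tt φ α a, tt φ β b⁆ = tt φ (α + β) (φ a β • b - φ b α • a) :=
  brk_single_single φ α β a b

/-- Nondegeneracy of the map `φ`. -/
def Nondeg : Prop :=
  (∀ α : A, (∀ d : T, φ d α = 0) → α = 0) ∧ (∀ d : T, (∀ α : A, φ d α = 0) → d = 0)

/-- `(A', T')` is a nondegenerate pair for `φ`. -/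
def NondegPair (A' : AddSubgroup A) (T' : Submodule F T) : Prop :=
  (∀ d ∈ T', (∀ α ∈ A', φ d α = 0) → d = 0) ∧
  (∀ α ∈ A', (∀ d ∈ T', φ d α = 0) → α = 0)

/-- The subset (in fact Lie subalgebra) of `W(A,T,φ)` consisting of the finitely
supported functions supported in `A'` with values in `T'`. -/
def supportedIn (A' : AddSubgroup A) (T' : Submodule F T) : Set (W F A T φ) :=
  {x | (∀ α : A, toF φ x α ∈ T') ∧ ∀ α : A, α ∉ A' → toF φ x α = 0}

end GW

lemma GW.pair_coeff {A : Type*} [AddCommGroup A] {n : ℕ}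
    (ε : Fin n → A) (hε : ∀ c : Fin n → ℤ, ∑ i, c i • ε i = 0 → c = 0)
    (a b : ℤ) (j l : Fin n) (h : a • ε j = b • ε l) :
    (j ≠ l → a = 0) ∧ (j = l → a = b) := by
  classical
  have key := hε (fun i => (if i = j then a else 0) - (if i = l then b else 0)) ?hs
  case hs =>
    simp only [sub_smul, ite_smul, zero_smul, Finset.sum_sub_distrib]
    simp [h]
  constructor
  · intro hjl
    have := congrFun key j
    simpa [hjl] using this
  · intro hjl; subst hjl
    have := congrFun key j
    simpa [sub_eq_zero] using this

/-- Lemma 2.4: if an automorphism `θ(t^α ∂) = χ(α) t^(σ α) (τ ∂)` of a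
simple generalized Witt algebra fixes the element
`w = Σ_i (t^(k_i ε_i) + t^(k'_i ε_i)) ∂_i`, then it fixes the subalgebra of elements
supported in `A'` with values in `T'` pointwise. -/
theorem GW.aut_fixing_w_is_id_on_subalgebra
    {F : Type*} [Field F] [CharZero F]
    {A : Type*} [AddCommGroup A]
    {T : Type*} [AddCommGroup T] [Module F T]
    (φ : T →ₗ[F] (A →+ F))
    (hA : Nontrivial A) (hφ : GW.Nondeg φ)
    (n m : ℕ) (hm : 0 < m) (hmn : m ≤ n)
    -- a basis `ε` of a free subgroup `A'` of rank `n`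
    (ε : Fin n → A) (hε : ∀ c : Fin n → ℤ, ∑ i, c i • ε i = 0 → c = 0)
    (A' : AddSubgroup A) (hA' : A' = AddSubgroup.closure (Set.range ε))
    -- a basis `dd` of an `m`-dimensional subspace `T'` of `T`
    (dd : Fin m → T) (hdd : LinearIndependent F dd)
    (T' : Submodule F T) (hT' : T' = Submodule.span F (Set.range dd))
    (hpair : GW.NondegPair φ A' T')
    -- the exponents, pairwise relatively prime and at least 2
    (k k' : Fin n → ℤ) (hk : ∀ i, 2 ≤ k i) (hk' : ∀ i, 2 ≤ k' i)
    (hcop : ∀ p q : Fin n ⊕ Fin n, p ≠ q →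
      IsCoprime (Sum.elim k k' p) (Sum.elim k k' q))
    -- `D i = ∂_i` for `i < m` and `D i = ∂_m` for `m ≤ i ≤ n`
    (D : Fin n → T)
    (hD : ∀ i : Fin n, D i = if h : (i : ℕ) < m then dd ⟨i, h⟩
      else dd ⟨m - 1, Nat.sub_lt hm Nat.one_pos⟩)
    (w : GW.W F A T φ)
    (hw : w = ∑ i, (GW.tt φ (k i • ε i) (D i) + GW.tt φ (k' i • ε i) (D i)))
    -- the automorphism `θ`, of the form `θ(t^α ∂) = χ(α) t^(σ α) (τ ∂)`
    (θ : GW.W F A T φ ≃ₗ⁅F⁆ GW.W F A T φ)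
    (χ : Multiplicative A →* Fˣ) (σ : A ≃+ A) (τ : T ≃ₗ[F] T)
    (hτσ : ∀ (d : T) (γ : A), φ (τ d) (σ γ) = φ d γ)
    (hθ : ∀ (α : A) (d : T),
      θ (GW.tt φ α d) = (χ (Multiplicative.ofAdd α) : F) • GW.tt φ (σ α) (τ d))
    (hfix : θ w = w) :
    ∀ x ∈ GW.supportedIn φ A' T', θ x = x := by
  classical
  -- abbreviations
  let c : Fin n ⊕ Fin n → ℤ := Sum.elim k k'
  let idx : Fin n ⊕ Fin n → Fin n := Sum.elim id id
  let e : Fin n ⊕ Fin n → A := fun p => c p • ε (idx p)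
  have hc2 : ∀ p, 2 ≤ c p := by rintro (i | i); exacts [hk i, hk' i]
  have hcelim : ∀ p, Sum.elim k k' p = c p := fun p => rfl
  have hcu : ∀ p, ¬ IsUnit (c p) := by
    intro p hu
    rcases Int.isUnit_iff.mp hu with h | h <;> · have := hc2 p; omega
  have hDmem : ∀ i, D i ∈ T' := by
    intro i; rw [hD i, hT']
    split <;> exact Submodule.subset_span ⟨_, rfl⟩
  have hDne : ∀ i, D i ≠ 0 := by
    intro i; rw [hD i]; split <;> exact hdd.ne_zero _
  have pairc : ∀ (a b : ℤ) (j l : Fin n), a • ε j = b • ε l →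
      (j ≠ l → a = 0) ∧ (j = l → a = b) := GW.pair_coeff ε hε
  -- `e` is injective
  have einj : Function.Injective e := by
    intro p q h
    have h1 := pairc (c p) (c q) (idx p) (idx q) h
    by_cases hil : idx p = idx q
    · have hcc : c p = c q := h1.2 hil
      rcases p with i | i <;> rcases q with j | j
      · exact congrArg Sum.inl hil
      · exfalso
        have hij : i = j := hil
        subst hij
        have hco := hcop (Sum.inl i) (Sum.inr i) (by simp)
        simp only [Sum.elim_inl, Sum.elim_inr] at hco
        have hkk : k i = k' i := hcc
        rw [← hkk] at hco
        exact hcu (Sum.inl i) (isCoprime_self.mp hco)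
      · exfalso
        have hij : j = i := hil.symm
        subst hij
        have hco := hcop (Sum.inl j) (Sum.inr j) (by simp)
        simp only [Sum.elim_inl, Sum.elim_inr] at hco
        have hkk : k' j = k j := hcc
        rw [hkk] at hco
        exact hcu (Sum.inl j) (isCoprime_self.mp hco)
      · exact congrArg Sum.inr hil
    · exfalso
      have := h1.1 hil
      have := hc2 p
      omega
  -- rewrite `w` as a sum over `Fin n ⊕ Fin n`
  have hwW : w = ∑ p : Fin n ⊕ Fin n, GW.tt φ (e p) (D (idx p)) := by
    rw [hw, Fintype.sum_sum_type, ← Finset.sum_add_distrib]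
    rfl
  have hθw : θ w = ∑ p : Fin n ⊕ Fin n,
      (χ (Multiplicative.ofAdd (e p)) : F) • GW.tt φ (σ (e p)) (τ (D (idx p))) := by
    rw [hwW]
    calc θ (∑ p : Fin n ⊕ Fin n, GW.tt φ (e p) (D (idx p)))
        = ∑ p : Fin n ⊕ Fin n, θ (GW.tt φ (e p) (D (idx p))) :=
          by
            letI : AddCommMonoid (GW.W F A T φ) := LieRing.toAddCommGroup.toAddCommMonoid
            exact map_sum θ.toLinearEquiv _ _
      _ = _ := Finset.sum_congr rfl (fun p _ => hθ _ _)
  -- the fixed-point equation at the level of finsupps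
  have hEq : (∑ p : Fin n ⊕ Fin n,
        (χ (Multiplicative.ofAdd (e p)) : F) • Finsupp.single (σ (e p)) (τ (D (idx p))))
      = ∑ p : Fin n ⊕ Fin n, Finsupp.single (e p) (D (idx p)) := by
    have h := hfix
    rw [hθw, hwW] at h
    exact h
  have hσe : Function.Injective (fun p => σ (e p)) :=
    fun p q h => einj (σ.injective h)
  -- the key support/coefficient matching
  have hkey : ∀ q, ∃ p, e p = σ (e q) ∧
      (χ (Multiplicative.ofAdd (e q)) : F) • τ (D (idx q)) = D (idx p) := by
    intro q
    have h1 := congrArg (fun f : A →₀ T => f (σ (e q))) hEq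
    rw [Finsupp.finset_sum_apply, Finsupp.finset_sum_apply] at h1
    rw [Finset.sum_eq_single q (fun p _ hpq => by
        rw [Finsupp.smul_apply, Finsupp.single_apply, if_neg (fun h => hpq (hσe h)), smul_zero])
      (fun hq => absurd (Finset.mem_univ q) hq)] at h1
    rw [Finsupp.smul_apply, Finsupp.single_apply, if_pos rfl] at h1
    by_cases hex : ∃ p, e p = σ (e q)
    · obtain ⟨p, hp⟩ := hex
      refine ⟨p, hp, ?_⟩
      rw [h1, Finset.sum_eq_single p (fun p' _ hp'p => by
          rw [Finsupp.single_apply, if_neg (fun h => hp'p (einj (h.trans hp.symm)))])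
        (fun hq => absurd (Finset.mem_univ p) hq)]
      rw [Finsupp.single_apply, if_pos hp]
    · exfalso
      rw [Finset.sum_eq_zero (fun p _ => by
          rw [Finsupp.single_apply, if_neg (fun h => hex ⟨p, h⟩)])] at h1
      have hne : (χ (Multiplicative.ofAdd (e q)) : F) • τ (D (idx q)) ≠ 0 :=
        smul_ne_zero (Units.ne_zero _)
          (fun h => hDne (idx q) (τ.map_eq_zero_iff.mp h))
      exact hne h1
  -- the arithmetic argument: σ fixes the exponents of `w` and coefficients match
  have main : ∀ i : Fin n, σ (k i • ε i) = k i • ε i ∧ σ (k' i • ε i) = k' i • ε i ∧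
      (χ (Multiplicative.ofAdd (k i • ε i)) : F) • τ (D i) = D i ∧
      (χ (Multiplicative.ofAdd (k' i • ε i)) : F) • τ (D i) = D i := by
    intro i
    obtain ⟨p, hp, hcoef⟩ := hkey (Sum.inl i)
    obtain ⟨p', hp', hcoef'⟩ := hkey (Sum.inr i)
    have he_inl : e (Sum.inl i) = k i • ε i := rfl
    have he_inr : e (Sum.inr i) = k' i • ε i := rfl
    have hmul : (k' i * c p) • ε (idx p) = (k i * c p') • ε (idx p') := by
      have h1 : (k' i * c p) • ε (idx p) = k' i • σ (e (Sum.inl i)) := by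
        rw [← hp, mul_smul]
      have h2 : (k i * c p') • ε (idx p') = k i • σ (e (Sum.inr i)) := by
        rw [← hp', mul_smul]
      rw [h1, h2, he_inl, he_inr, ← map_zsmul σ, ← map_zsmul σ, smul_smul, smul_smul,
        mul_comm (k' i) (k i)]
    have hcases := pairc _ _ _ _ hmul
    by_cases hidxeq : idx p = idx p'
    · have heq : k' i * c p = k i * c p' := hcases.2 hidxeq
      have hco : IsCoprime (k i) (k' i) := hcop (Sum.inl i) (Sum.inr i) (by simp)
      have hdvd : k i ∣ c p := hco.dvd_of_dvd_mul_left ⟨c p', heq⟩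
      have hpi : p = Sum.inl i := by
        by_contra hne
        have hco2 := hcop (Sum.inl i) p (fun h => hne h.symm)
        rw [hcelim] at hco2
        exact hcu (Sum.inl i) (hco2.isUnit_of_dvd' dvd_rfl hdvd)
      have hidxp : idx p = i := by rw [hpi]; rfl
      have hcp : c p = k i := by rw [hpi]; rfl
      have hσ1 : σ (k i • ε i) = k i • ε i := by
        rw [← he_inl, ← hp, hpi, he_inl]
      have hcp' : c p' = k' i := by
        have : k i * k' i = k i * c p' := by rw [← heq, hcp, mul_comm]
        have hki : (k i : ℤ) ≠ 0 := by have := hk i; omega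
        exact (mul_left_cancel₀ hki this).symm
      have hidxp' : idx p' = i := by rw [← hidxeq, hidxp]
      have hσ2 : σ (k' i • ε i) = k' i • ε i := by
        rw [← he_inr, ← hp']
        show c p' • ε (idx p') = k' i • ε i
        rw [hcp', hidxp']
      refine ⟨hσ1, hσ2, ?_, ?_⟩
      · have := hcoef; rw [hidxp] at this; exact this
      · have := hcoef'; rw [hidxp'] at this; exact this
    · exfalso
      have h0 := hcases.1 hidxeq
      have := hk' i
      have := hc2 p
      nlinarith
  -- ε i ∈ A'
  have hεA : ∀ i, ε i ∈ A' := by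
    intro i; rw [hA']; exact AddSubgroup.subset_closure ⟨i, rfl⟩
  -- Step 2 : φ(τ d, α) = φ(d, α) for α ∈ A'
  have hφτ : ∀ α ∈ A', ∀ d : T, φ (τ d) α = φ d α := by
    intro α hα
    rw [hA'] at hα
    induction hα using AddSubgroup.closure_induction with
    | mem x hx =>
      obtain ⟨i, rfl⟩ := hx
      intro d
      have h1 := hτσ d (k i • ε i)
      rw [(main i).1] at h1
      rw [map_zsmul, map_zsmul, zsmul_eq_mul, zsmul_eq_mul] at h1
      have hki : ((k i : ℤ) : F) ≠ 0 := by
        rw [Int.cast_ne_zero]; have := hk i; omega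
      exact mul_left_cancel₀ hki h1
    | zero => intro d; simp
    | add x y hx hy ihx ihy => intro d; rw [map_add, map_add, ihx d, ihy d]
    | neg x hx ihx => intro d; rw [map_neg, map_neg, ihx d]
  -- Step 3 : σ fixes A' pointwise
  have hσε : ∀ i, σ (ε i) = ε i := by
    intro i
    have h0 : ∀ x : T, φ x (σ (ε i) - ε i) = 0 := by
      intro x
      rw [map_sub]
      have h1 := hτσ (τ.symm x) (ε i)
      rw [τ.apply_symm_apply] at h1
      have h2 := hφτ (ε i) (hεA i) (τ.symm x)
      rw [τ.apply_symm_apply] at h2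
      rw [h1, ← h2, sub_self]
    exact sub_eq_zero.mp (hφ.1 _ h0)
  have hσA : ∀ α ∈ A', σ α = α := by
    intro α hα
    rw [hA'] at hα
    induction hα using AddSubgroup.closure_induction with
    | mem x hx => obtain ⟨i, rfl⟩ := hx; exact hσε i
    | zero => simp
    | add x y hx hy ihx ihy => rw [map_add, ihx, ihy]
    | neg x hx ihx => rw [map_neg, ihx]
  -- Step 4 : τ fixes T' pointwise
  have hτD : ∀ i, τ (D i) ∈ T' := by
    intro i
    have h1 := (main i).2.2.1
    have h2 : τ (D i) = ((χ (Multiplicative.ofAdd (k i • ε i)) : F))⁻¹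
        • ((χ (Multiplicative.ofAdd (k i • ε i)) : F) • τ (D i)) :=
      (inv_smul_smul₀ (Units.ne_zero _) _).symm
    rw [h2, h1]
    exact Submodule.smul_mem _ _ (hDmem i)
  have hτT' : ∀ d ∈ T', τ d ∈ T' := by
    intro d hd
    rw [hT'] at hd
    induction hd using Submodule.span_induction with
    | mem x hx =>
      obtain ⟨j, rfl⟩ := hx
      have hjn : (j : ℕ) < n := lt_of_lt_of_le j.isLt hmn
      have hDj : D ⟨j, hjn⟩ = dd j := by
        rw [hD]
        rw [dif_pos (show ((⟨j, hjn⟩ : Fin n) : ℕ) < m from j.isLt)]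
      rw [← hDj]
      exact hτD _
    | zero => rw [map_zero]; exact Submodule.zero_mem _
    | add x y hx hy ihx ihy => rw [map_add]; exact Submodule.add_mem _ ihx ihy
    | smul a x hx ihx => rw [map_smul]; exact Submodule.smul_mem _ _ ihx
  have hτfix : ∀ d ∈ T', τ d = d := by
    intro d hd
    have hsub : τ d - d ∈ T' := T'.sub_mem (hτT' d hd) hd
    have h0 : ∀ α ∈ A', φ (τ d - d) α = 0 := by
      intro α hα
      rw [map_sub, AddMonoidHom.sub_apply, hφτ α hα d, sub_self]
    exact sub_eq_zero.mp (hpair.1 _ hsub h0)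
  -- Step 5 : χ is trivial on A'
  have hχk : ∀ (i : Fin n) (l : ℤ), (χ (Multiplicative.ofAdd (l • ε i)) : F) • τ (D i) = D i →
      χ (Multiplicative.ofAdd (ε i)) ^ l = 1 := by
    intro i l hl
    rw [hτfix _ (hDmem i)] at hl
    have h1 : ((χ (Multiplicative.ofAdd (l • ε i)) : F) - 1) • D i = 0 := by
      rw [sub_smul, one_smul, hl, sub_self]
    have h2 : (χ (Multiplicative.ofAdd (l • ε i)) : F) = 1 := by
      rcases smul_eq_zero.mp h1 with h | h
      · exact sub_eq_zero.mp h
      · exact absurd h (hDne i)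
    have h3 : χ (Multiplicative.ofAdd (l • ε i)) = 1 := Units.ext (by rw [h2, Units.val_one])
    rw [← h3, ofAdd_zsmul, map_zpow]
  have hχε : ∀ i, χ (Multiplicative.ofAdd (ε i)) = 1 := by
    intro i
    have h1 := hχk i (k i) (main i).2.2.1
    have h2 := hχk i (k' i) (main i).2.2.2
    obtain ⟨a, b, hab⟩ := hcop (Sum.inl i) (Sum.inr i) (by simp)
    simp only [Sum.elim_inl, Sum.elim_inr] at hab
    set g := χ (Multiplicative.ofAdd (ε i)) with hg
    calc g = g ^ (a * k i + b * k' i) := by rw [hab, zpow_one]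
      _ = (g ^ k i) ^ a * (g ^ k' i) ^ b := by
          rw [zpow_add, mul_comm a, mul_comm b, zpow_mul, zpow_mul]
      _ = 1 := by rw [h1, h2, one_zpow, one_zpow, mul_one]
  have hχA : ∀ α ∈ A', χ (Multiplicative.ofAdd α) = 1 := by
    intro α hα
    rw [hA'] at hα
    induction hα using AddSubgroup.closure_induction with
    | mem x hx => obtain ⟨i, rfl⟩ := hx; exact hχε i
    | zero => exact map_one χ
    | add x y hx hy ihx ihy =>
      have : Multiplicative.ofAdd (x + y)
          = Multiplicative.ofAdd x * Multiplicative.ofAdd y := rfl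
      rw [this, map_mul, ihx, ihy, mul_one]
    | neg x hx ihx =>
      have : Multiplicative.ofAdd (-x) = (Multiplicative.ofAdd x)⁻¹ := rfl
      rw [this, map_inv, ihx, inv_one]
  -- Step 6 : conclusion
  intro x hx
  obtain ⟨hx1, hx2⟩ := hx
  have hxf : x = ∑ α ∈ (GW.toF φ x).support, GW.tt φ α (GW.toF φ x α) :=
    (Finsupp.sum_single (GW.toF φ x)).symm
  have h2 : θ (∑ α ∈ (GW.toF φ x).support, GW.tt φ α (GW.toF φ x α))
      = ∑ α ∈ (GW.toF φ x).support, GW.tt φ α (GW.toF φ x α) := by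
    calc θ (∑ α ∈ (GW.toF φ x).support, GW.tt φ α (GW.toF φ x α))
        = ∑ α ∈ (GW.toF φ x).support, θ (GW.tt φ α (GW.toF φ x α)) :=
          by
            letI : AddCommMonoid (GW.W F A T φ) := LieRing.toAddCommGroup.toAddCommMonoid
            exact map_sum θ.toLinearEquiv _ _
      _ = _ := by
          refine Finset.sum_congr rfl (fun α hαs => ?_)
          have hαA : α ∈ A' := by
            by_contra hn
            exact (Finsupp.mem_support_iff.mp hαs) (hx2 α hn)
          rw [hθ, hχA α hαA, hσA α hαA, hτfix _ (hx1 α), Units.val_one, one_smul]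
  exact (congrArg (fun y => θ y) hxf).trans (h2.trans hxf.symm)
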